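/- Let n be a positive even integer and let p > n + 1 be a prime. For r ∈ {0, 1, 2, 3, 4, 5} let S_r denote the sum in ℤ/pℤ of 1/(i_1 ⋯ i_n) over all n-tuples of integers 0 < i_1 < i_2 < ⋯ < i_n < p with i_1 ≡ r (mod 6). Then S_0 - S_3 = 2·(S_2 + S_3 + S_4) in ℤ/pℤ. -/

import Mathlib

/-- `S_r` is the sum in `ℤ/pℤ` of `1/(i₁⋯iₙ)` over all strictly increasing `n`-tuples of
integers `0 < i₁ < ⋯ < iₙ < p` with `i₁ ≡ r (mod 6)`. -/
noncomputable def zhaoSunS (n p : ℕ) (hn : 0 < n) (r : ℕ) : ZMod p :=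
  ∑ f ∈ (Fintype.piFinset fun _ : Fin n => Finset.Ioo 0 p).filter
      (fun f => (∀ i j : Fin n, i < j → f i < f j) ∧ f ⟨0, hn⟩ % 6 = r),
    ∏ k : Fin n, ((f k : ZMod p))⁻¹


namespace ZS

/-- tuple version of elementary symmetric sum of inverses over `Ioo m p` -/
noncomputable def WT (p k m : ℕ) : ZMod p :=
  ∑ f ∈ (Fintype.piFinset fun _ : Fin k => Finset.Ioo m p).filter
      (fun f => ∀ i j : Fin k, i < j → f i < f j),
    ∏ i : Fin k, ((f i : ZMod p))⁻¹

lemma WT_zero (p m : ℕ) : WT p 0 m = 1 := by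
  rw [WT]
  rw [Finset.filter_true_of_mem (fun f _ => fun i j h => i.elim0)]
  simp only [Finset.univ_eq_empty, Finset.prod_empty, Finset.sum_const, nsmul_eq_mul, mul_one]
  rw [Fintype.card_piFinset]
  simp

/-- weighted min-split for tuples -/
lemma TMS (p : ℕ) (u : ℕ → ZMod p) (k m : ℕ) :
    ∑ f ∈ (Fintype.piFinset fun _ : Fin (k+1) => Finset.Ioo m p).filter
        (fun f => ∀ i j : Fin (k+1), i < j → f i < f j),
      u (f 0) * ∏ i : Fin (k+1), ((f i : ZMod p))⁻¹
    = ∑ j ∈ Finset.Ioo m p, u j * (((j : ZMod p))⁻¹ * WT p k j) := by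
  have hR : ∑ j ∈ Finset.Ioo m p, u j * (((j : ZMod p))⁻¹ * WT p k j)
      = ∑ x ∈ (Finset.Ioo m p).sigma (fun j =>
          (Fintype.piFinset fun _ : Fin k => Finset.Ioo j p).filter
            (fun f => ∀ i j : Fin k, i < j → f i < f j)),
          u x.1 * ((x.1 : ZMod p)⁻¹ * ∏ i : Fin k, ((x.2 i : ZMod p))⁻¹) := by
    rw [Finset.sum_sigma]
    refine Finset.sum_congr rfl fun j hj => ?_
    rw [WT, Finset.mul_sum, Finset.mul_sum]
  rw [hR]
  refine Finset.sum_nbij' (fun f => ⟨f 0, Fin.tail f⟩) (fun x => Fin.cons x.1 x.2) ?_ ?_ ?_ ?_ ?_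
  · intro f hf
    simp only [Finset.mem_filter, Fintype.mem_piFinset] at hf
    obtain ⟨hmem, hmono⟩ := hf
    simp only [Finset.mem_sigma, Finset.mem_filter, Fintype.mem_piFinset]
    refine ⟨hmem 0, ⟨fun i => ?_, fun i j hij => ?_⟩⟩
    · have h1 := hmem i.succ
      simp only [Finset.mem_Ioo] at h1 ⊢
      exact ⟨hmono 0 i.succ i.succ_pos, h1.2⟩
    · exact hmono i.succ j.succ (Fin.succ_lt_succ_iff.mpr hij)
  · rintro ⟨j, g⟩ hx
    simp only [Finset.mem_sigma, Finset.mem_filter, Fintype.mem_piFinset, Finset.mem_Ioo] at hx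
    obtain ⟨hj, hmem, hmono⟩ := hx
    simp only [Finset.mem_filter, Fintype.mem_piFinset]
    constructor
    · intro i
      refine Fin.cases ?_ (fun i' => ?_) i
      · simpa using hj
      · simp only [Fin.cons_succ, Finset.mem_Ioo]
        exact ⟨lt_trans hj.1 (hmem i').1, (hmem i').2⟩
    · intro i j' hij
      refine Fin.cases (fun hij => ?_) (fun i' hij => ?_) i hij
      · refine Fin.cases (fun h => absurd h (lt_irrefl _)) (fun j'' _ => ?_) j' hij
        simp only [Fin.cons_zero, Fin.cons_succ]
        exact (hmem j'').1
      · refine Fin.cases (fun h => absurd h (by simp [Fin.lt_def])) (fun j'' hij => ?_) j' hij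
        simp only [Fin.cons_succ]
        exact hmono i' j'' (by simpa [Fin.succ_lt_succ_iff] using hij)
  · intro f _; exact Fin.cons_self_tail f
  · rintro ⟨j, g⟩ _
    simp [Fin.tail_cons]
  · intro f _
    rw [Fin.prod_univ_succ]
    simp [Fin.tail]

lemma WT_succ (p : ℕ) (k m : ℕ) :
    WT p (k+1) m = ∑ j ∈ Finset.Ioo m p, ((j : ZMod p))⁻¹ * WT p k j := by
  have := TMS p (fun _ => 1) k m
  simpa [WT] using this


lemma WT_eq_WS (p k m : ℕ) :
    WT p k m = ∑ A ∈ (Finset.Ioo m p).powersetCard k, ∏ a ∈ A, ((a : ZMod p))⁻¹ := by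
  rw [WT]
  refine Finset.sum_bij (fun f _ => Finset.image f Finset.univ) ?_ ?_ ?_ ?_
  · intro f hf
    simp only [Finset.mem_filter, Fintype.mem_piFinset] at hf
    obtain ⟨hmem, hmono⟩ := hf
    rw [Finset.mem_powersetCard]
    constructor
    · intro a ha
      simp only [Finset.mem_image] at ha
      obtain ⟨i, _, rfl⟩ := ha
      exact hmem i
    · rw [Finset.card_image_of_injective _ (show StrictMono f from fun i j h => hmono i j h).injective]
      simp
  · intro f hf g hg hfg
    simp only [Finset.mem_filter, Fintype.mem_piFinset] at hf hg
    have hmf : StrictMono f := fun i j h => hf.2 i j h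
    have hmg : StrictMono g := fun i j h => hg.2 i j h
    have hc : (Finset.image f Finset.univ).card = k := by
      rw [Finset.card_image_of_injective _ hmf.injective]; simp
    have hfg' : Finset.image f Finset.univ = Finset.image g Finset.univ := hfg
    have h1 := Finset.orderEmbOfFin_unique hc (fun x => Finset.mem_image_of_mem f (Finset.mem_univ x)) hmf
    have h2 := Finset.orderEmbOfFin_unique hc (f := g)
      (fun x => hfg' ▸ Finset.mem_image_of_mem g (Finset.mem_univ x)) hmg
    exact h1.trans h2.symm
  · intro B hB
    rw [Finset.mem_powersetCard] at hB
    obtain ⟨hBs, hBc⟩ := hB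
    refine ⟨fun i => B.orderEmbOfFin hBc i, ?_, ?_⟩
    · simp only [Finset.mem_filter, Fintype.mem_piFinset]
      exact ⟨fun i => hBs (Finset.orderEmbOfFin_mem B hBc i),
        fun i j h => (B.orderEmbOfFin hBc).strictMono h⟩
    · apply Finset.eq_of_subset_of_card_le
      · intro a ha
        simp only [Finset.mem_image] at ha
        obtain ⟨i, _, rfl⟩ := ha
        exact Finset.orderEmbOfFin_mem B hBc i
      · rw [Finset.card_image_of_injective _ (B.orderEmbOfFin hBc).injective]
        simp [hBc]
  · intro f hf
    simp only [Finset.mem_filter, Fintype.mem_piFinset] at hf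
    rw [Finset.prod_image (fun x _ y _ h =>
      (show StrictMono f from fun i j h => hf.2 i j h).injective h)]

lemma WT_units_zero (p : ℕ) (hp : p.Prime) (k : ℕ) (hk1 : 1 ≤ k) (hk2 : k ≤ p - 2) :
    WT p k 0 = 0 := by
  haveI : Fact p.Prime := ⟨hp⟩
  haveI : NeZero p := ⟨hp.pos.ne'⟩
  rw [WT_eq_WS]
  have hcastmem : ∀ (A : Finset ℕ), A ∈ (Finset.Ioo 0 p).powersetCard k →
      ∀ a ∈ A, 0 < a ∧ a < p := by
    intro A hA a ha
    exact Finset.mem_Ioo.mp ((Finset.mem_powersetCard.mp hA).1 ha)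
  -- step A
  have stepA : ∑ A ∈ (Finset.Ioo 0 p).powersetCard k, ∏ a ∈ A, ((a : ZMod p))⁻¹
      = ∑ B ∈ ((Finset.univ : Finset (ZMod p)).erase 0).powersetCard k, ∏ x ∈ B, x⁻¹ := by
    refine Finset.sum_nbij' (fun A => A.image (Nat.cast : ℕ → ZMod p))
      (fun B => B.image ZMod.val) ?_ ?_ ?_ ?_ ?_
    · intro A hA
      rw [Finset.mem_powersetCard] at hA ⊢
      constructor
      · intro x hx
        simp only [Finset.mem_image] at hx
        obtain ⟨a, ha, rfl⟩ := hx
        have ha' := Finset.mem_Ioo.mp (hA.1 ha)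
        refine Finset.mem_erase.mpr ⟨?_, Finset.mem_univ _⟩
        rw [Ne, ZMod.natCast_eq_zero_iff]
        exact fun hdvd => absurd (Nat.le_of_dvd ha'.1 hdvd) (not_le.mpr ha'.2)
      · rw [← hA.2]
        apply Finset.card_image_of_injOn
        intro x hx y hy hxy
        have hx' := Finset.mem_Ioo.mp (hA.1 hx)
        have hy' := Finset.mem_Ioo.mp (hA.1 hy)
        have := congrArg ZMod.val hxy
        rwa [ZMod.val_cast_of_lt hx'.2, ZMod.val_cast_of_lt hy'.2] at this
    · intro B hB
      rw [Finset.mem_powersetCard] at hB ⊢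
      constructor
      · intro a ha
        simp only [Finset.mem_image] at ha
        obtain ⟨x, hx, rfl⟩ := ha
        have hx0 := (Finset.mem_erase.mp (hB.1 hx)).1
        rw [Finset.mem_Ioo]
        refine ⟨Nat.pos_of_ne_zero (fun h => hx0 ?_), ZMod.val_lt x⟩
        have := ZMod.natCast_rightInverse (n := p) x
        rw [← this, h]; simp
      · rw [← hB.2]
        apply Finset.card_image_of_injOn
        intro x _ y _ hxy
        have h1 := ZMod.natCast_rightInverse (n := p) x
        have h2 := ZMod.natCast_rightInverse (n := p) y
        rw [← h1, ← h2, hxy]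
    · intro A hA
      show Finset.image ZMod.val (Finset.image (Nat.cast : ℕ → ZMod p) A) = A
      rw [Finset.image_image]
      have : ∀ a ∈ A, (ZMod.val ∘ (Nat.cast : ℕ → ZMod p)) a = id a := by
        intro a ha
        exact ZMod.val_cast_of_lt ((hcastmem A hA a ha).2)
      rw [Finset.image_congr this, Finset.image_id]
    · intro B hB
      show Finset.image (Nat.cast : ℕ → ZMod p) (Finset.image ZMod.val B) = B
      rw [Finset.image_image]
      have : ∀ x ∈ B, ((Nat.cast : ℕ → ZMod p) ∘ ZMod.val) x = id x := by
        intro x _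
        exact ZMod.natCast_rightInverse (n := p) x
      rw [Finset.image_congr this, Finset.image_id]
    · intro A hA
      rw [Finset.prod_image]
      intro x hx y hy hxy
      have := congrArg ZMod.val hxy
      rwa [ZMod.val_cast_of_lt ((hcastmem A hA x hx).2),
        ZMod.val_cast_of_lt ((hcastmem A hA y hy).2)] at this
  -- step B : replace x⁻¹ by x
  have stepB : ∑ B ∈ ((Finset.univ : Finset (ZMod p)).erase 0).powersetCard k, ∏ x ∈ B, x⁻¹
      = ∑ B ∈ ((Finset.univ : Finset (ZMod p)).erase 0).powersetCard k, ∏ x ∈ B, x := by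
    have hmem : ∀ B ∈ ((Finset.univ : Finset (ZMod p)).erase 0).powersetCard k,
        B.image (fun x : ZMod p => x⁻¹) ∈ ((Finset.univ : Finset (ZMod p)).erase 0).powersetCard k := by
      intro B hB
      rw [Finset.mem_powersetCard] at hB ⊢
      constructor
      · intro x hx
        simp only [Finset.mem_image] at hx
        obtain ⟨y, hy, rfl⟩ := hx
        have hy0 := (Finset.mem_erase.mp (hB.1 hy)).1
        exact Finset.mem_erase.mpr ⟨inv_ne_zero hy0, Finset.mem_univ _⟩
      · rw [← hB.2]
        exact Finset.card_image_of_injOn (fun x _ y _ h => inv_injective h)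
    have hrt : ∀ B : Finset (ZMod p),
        Finset.image (fun x : ZMod p => x⁻¹) (Finset.image (fun x : ZMod p => x⁻¹) B) = B := by
      intro B
      rw [Finset.image_image]
      have : ∀ x ∈ B, ((fun x : ZMod p => x⁻¹) ∘ (fun x : ZMod p => x⁻¹)) x = id x := by
        intro x _; simp
      rw [Finset.image_congr this, Finset.image_id]
    refine Finset.sum_nbij' (fun B => B.image (fun x => x⁻¹)) (fun B => B.image (fun x => x⁻¹))
      hmem hmem (fun B _ => hrt B) (fun B _ => hrt B) ?_
    intro B _
    rw [Finset.prod_image (fun x _ y _ h => inv_injective h)]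
  rw [stepA, stepB]
  -- step C : scaling
  obtain ⟨g, hg⟩ := IsCyclic.exists_generator (α := (ZMod p)ˣ)
  have hgk : ((g : ZMod p))^k ≠ 1 := by
    intro h
    have : g ^ k = 1 := by
      ext
      simpa using h
    have hdvd := orderOf_dvd_of_pow_eq_one this
    rw [orderOf_eq_card_of_forall_mem_zpowers hg] at hdvd
    have hcard : Nat.card (ZMod p)ˣ = p - 1 := by
      rw [Nat.card_eq_fintype_card, ZMod.card_units_eq_totient, Nat.totient_prime hp]
    rw [hcard] at hdvd
    have := Nat.le_of_dvd hk1 hdvd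
    omega
  set V := ∑ B ∈ ((Finset.univ : Finset (ZMod p)).erase 0).powersetCard k, ∏ x ∈ B, x with hV
  have hscale : ((g : ZMod p))^k * V = V := by
    rw [hV, Finset.mul_sum]
    refine Finset.sum_nbij' (fun B => B.image (fun x => (g : ZMod p) * x))
      (fun B => B.image (fun x => ((g : ZMod p))⁻¹ * x)) ?_ ?_ ?_ ?_ ?_
    · intro B hB
      rw [Finset.mem_powersetCard] at hB ⊢
      constructor
      · intro x hx
        simp only [Finset.mem_image] at hx
        obtain ⟨y, hy, rfl⟩ := hx
        have hy0 := (Finset.mem_erase.mp (hB.1 hy)).1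
        exact Finset.mem_erase.mpr ⟨mul_ne_zero (g.ne_zero) hy0, Finset.mem_univ _⟩
      · rw [← hB.2]
        exact Finset.card_image_of_injOn
          (fun x _ y _ h => mul_left_cancel₀ (g.ne_zero) h)
    · intro B hB
      rw [Finset.mem_powersetCard] at hB ⊢
      constructor
      · intro x hx
        simp only [Finset.mem_image] at hx
        obtain ⟨y, hy, rfl⟩ := hx
        have hy0 := (Finset.mem_erase.mp (hB.1 hy)).1
        exact Finset.mem_erase.mpr ⟨mul_ne_zero (inv_ne_zero g.ne_zero) hy0, Finset.mem_univ _⟩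
      · rw [← hB.2]
        exact Finset.card_image_of_injOn
          (fun x _ y _ h => mul_left_cancel₀ (inv_ne_zero g.ne_zero) h)
    · intro B _
      show Finset.image (fun x => ((g : ZMod p))⁻¹ * x) (Finset.image (fun x => (g : ZMod p) * x) B) = B
      rw [Finset.image_image]
      have : ∀ x ∈ B, ((fun x => ((g : ZMod p))⁻¹ * x) ∘ (fun x => (g : ZMod p) * x)) x = id x := by
        intro x _
        show ((g : ZMod p))⁻¹ * ((g : ZMod p) * x) = x
        rw [inv_mul_cancel_left₀ g.ne_zero]
      rw [Finset.image_congr this, Finset.image_id]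
    · intro B _
      show Finset.image (fun x => (g : ZMod p) * x) (Finset.image (fun x => ((g : ZMod p))⁻¹ * x) B) = B
      rw [Finset.image_image]
      have : ∀ x ∈ B, ((fun x => (g : ZMod p) * x) ∘ (fun x => ((g : ZMod p))⁻¹ * x)) x = id x := by
        intro x _
        show (g : ZMod p) * (((g : ZMod p))⁻¹ * x) = x
        rw [mul_inv_cancel_left₀ g.ne_zero]
      rw [Finset.image_congr this, Finset.image_id]
    · intro B hB
      rw [Finset.prod_image (fun x _ y _ h => mul_left_cancel₀ (g.ne_zero) h)]
      rw [Finset.prod_mul_distrib, Finset.prod_const, (Finset.mem_powersetCard.mp hB).2]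
  have : (((g : ZMod p))^k - 1) * V = 0 := by
    rw [sub_mul, one_mul, hscale, sub_self]
  rcases mul_eq_zero.mp this with h | h
  · exact absurd (by linear_combination h) hgk
  · exact h

-- hockey stick
lemma sum_range_choose' (t m : ℕ) : ∑ i ∈ Finset.range t, i.choose m = t.choose (m+1) := by
  induction t with
  | zero => simp
  | succ t ih =>
    rw [Finset.sum_range_succ, ih, Nat.choose_succ_succ t m]
    exact Nat.add_comm _ _

lemma choose_p_sub_one (p : ℕ) (hp : p.Prime) (m : ℕ) (hm : m ≤ p - 1) :
    (((p-1).choose m : ℕ) : ZMod p) = (-1 : ZMod p)^m := by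
  obtain ⟨q, rfl⟩ : ∃ q, p = q + 1 := ⟨p - 1, by have := hp.pos; omega⟩
  simp only [Nat.add_sub_cancel] at hm ⊢
  induction m with
  | zero => simp
  | succ m ih =>
    have hm' : m ≤ q := by omega
    have hpas : q.choose m + q.choose (m+1) = (q+1).choose (m+1) := by
      rw [Nat.choose_succ_succ q m]
    have hdvd : (q+1) ∣ (q+1).choose (m+1) := hp.dvd_choose_self (by omega) (by omega)
    have hzero : (((q+1).choose (m+1) : ℕ) : ZMod (q+1)) = 0 :=
      (ZMod.natCast_eq_zero_iff _ _).mpr hdvd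
    have : ((q.choose m : ℕ) : ZMod (q+1)) + ((q.choose (m+1) : ℕ) : ZMod (q+1)) = 0 := by
      rw [← Nat.cast_add, hpas, hzero]
    rw [ih hm'] at this
    rw [pow_succ]
    linear_combination this

-- chunk D
lemma cast_ne_zero_of (p a : ℕ) (h0 : 0 < a) (h1 : a < p) : ((a : ℕ) : ZMod p) ≠ 0 := by
  rw [Ne, ZMod.natCast_eq_zero_iff]
  exact fun hdvd => absurd (Nat.le_of_dvd h0 hdvd) (not_le.mpr h1)

lemma sum_Ioo (p : ℕ) (h : ℕ → ZMod p) (i : ℕ) :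
    ∑ j ∈ Finset.Ioo i p, h j
      = ∑ j' ∈ Finset.range (p-1), if i ≤ j' then h (j'+1) else 0 := by
  rw [← Finset.sum_filter]
  refine Finset.sum_nbij' (fun j => j - 1) (fun j' => j' + 1) ?_ ?_ ?_ ?_ ?_
  · intro j hj
    simp only [Finset.mem_Ioo] at hj
    simp only [Finset.mem_filter, Finset.mem_range]
    omega
  · intro j' hj'
    simp only [Finset.mem_filter, Finset.mem_range] at hj'
    simp only [Finset.mem_Ioo]
    omega
  · intro j hj
    simp only [Finset.mem_Ioo] at hj
    show j - 1 + 1 = j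
    omega
  · intro j' _
    show j' + 1 - 1 = j'
    omega
  · intro j hj
    simp only [Finset.mem_Ioo] at hj
    show h j = h (j - 1 + 1)
    congr 1
    omega

lemma WT_succ_range (p k m : ℕ) :
    WT p (k+1) m = ∑ j' ∈ Finset.range (p-1),
      if m ≤ j' then ((j'+1 : ℕ) : ZMod p)⁻¹ * WT p k (j'+1) else 0 := by
  rw [WT_succ, sum_Ioo]

lemma WT_succ_zero (p k : ℕ) :
    WT p (k+1) 0 = ∑ j' ∈ Finset.range (p-1), ((j'+1 : ℕ) : ZMod p)⁻¹ * WT p k (j'+1) := by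
  rw [WT_succ_range]
  exact Finset.sum_congr rfl fun j' _ => if_pos (Nat.zero_le _)

lemma WT_partial (p k m' : ℕ) (hm : m' + 1 ≤ p - 1) :
    ∑ s' ∈ Finset.range (m'+1), ((s'+1 : ℕ) : ZMod p)⁻¹ * WT p k (s'+1)
      = WT p (k+1) 0 - WT p (k+1) (m'+1) := by
  rw [WT_succ_zero, WT_succ_range, ← Finset.sum_sub_distrib]
  have hstep : ∀ j' ∈ Finset.range (p-1),
      ((j'+1 : ℕ) : ZMod p)⁻¹ * WT p k (j'+1)
        - (if m' + 1 ≤ j' then ((j'+1 : ℕ) : ZMod p)⁻¹ * WT p k (j'+1) else 0)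
      = (if j' < m' + 1 then ((j'+1 : ℕ) : ZMod p)⁻¹ * WT p k (j'+1) else 0) := by
    intro j' _
    by_cases h : m' + 1 ≤ j'
    · rw [if_pos h, if_neg (by omega), sub_self]
    · rw [if_neg h, if_pos (by omega), sub_zero]
  rw [Finset.sum_congr rfl hstep, ← Finset.sum_filter]
  have : Finset.filter (fun j' => j' < m' + 1) (Finset.range (p-1)) = Finset.range (m'+1) := by
    ext x
    simp only [Finset.mem_filter, Finset.mem_range]
    omega
  rw [this]

lemma alt_sum_choose (p : ℕ) (j m : ℕ) :
    ∑ s ∈ Finset.range (m+1), (-1 : ZMod p)^s * (((j+1).choose s : ℕ) : ZMod p)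
      = (-1 : ZMod p)^m * ((j.choose m : ℕ) : ZMod p) := by
  induction m with
  | zero => simp
  | succ m ih =>
    rw [Finset.sum_range_succ, ih]
    have hc : (((j+1).choose (m+1) : ℕ) : ZMod p)
        = ((j.choose m : ℕ) : ZMod p) + ((j.choose (m+1) : ℕ) : ZMod p) := by
      rw [← Nat.cast_add, Nat.choose_succ_succ j m]
    rw [hc, pow_succ]
    ring

lemma choose_inv_swap (p : ℕ) (hp : p.Prime) (j' s' : ℕ) (hj : j' + 1 ≤ p - 1)
    (hs : s' + 1 ≤ p - 1) :
    ((s'+1 : ℕ) : ZMod p)⁻¹ * ((j'.choose s' : ℕ) : ZMod p)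
      = ((j'+1 : ℕ) : ZMod p)⁻¹ * (((j'+1).choose (s'+1) : ℕ) : ZMod p) := by
  haveI : Fact p.Prime := ⟨hp⟩
  have hj0 : ((j'+1 : ℕ) : ZMod p) ≠ 0 := cast_ne_zero_of p _ (by omega) (by omega)
  have hs0 : ((s'+1 : ℕ) : ZMod p) ≠ 0 := cast_ne_zero_of p _ (by omega) (by omega)
  have hN := Nat.add_one_mul_choose_eq j' s'
  have hC : ((j'+1 : ℕ) : ZMod p) * ((j'.choose s' : ℕ) : ZMod p)
      = (((j'+1).choose (s'+1) : ℕ) : ZMod p) * ((s'+1 : ℕ) : ZMod p) := by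
    rw [← Nat.cast_mul, ← Nat.cast_mul]
    exact_mod_cast congrArg (Nat.cast : ℕ → ZMod p) hN
  rw [inv_mul_eq_div, inv_mul_eq_div, div_eq_div_iff hs0 hj0]
  linear_combination hC

lemma BIN (p : ℕ) (hp : p.Prime) (j' m' : ℕ) (hj : j' + 1 ≤ p - 1) (hm : m' + 1 ≤ p - 1) :
    ((j'.choose (m'+1) : ℕ) : ZMod p) * ((j'+1 : ℕ) : ZMod p)⁻¹
      = ∑ s' ∈ Finset.range (m'+1),
          (-1 : ZMod p)^m' * (-1 : ZMod p)^s' * (((s'+1 : ℕ) : ZMod p)⁻¹ * ((j'.choose s' : ℕ) : ZMod p))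
        + (-1 : ZMod p)^(m'+1) * ((j'+1 : ℕ) : ZMod p)⁻¹ := by
  haveI : Fact p.Prime := ⟨hp⟩
  -- rewrite each summand
  have hsum : ∀ s' ∈ Finset.range (m'+1),
      (-1 : ZMod p)^m' * (-1 : ZMod p)^s' * (((s'+1 : ℕ) : ZMod p)⁻¹ * ((j'.choose s' : ℕ) : ZMod p))
        = ((-1 : ZMod p)^m' * (-1 : ZMod p)^s' * (((j'+1).choose (s'+1) : ℕ) : ZMod p))
            * ((j'+1 : ℕ) : ZMod p)⁻¹ := by
    intro s' hs'
    rw [Finset.mem_range] at hs'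
    rw [choose_inv_swap p hp j' s' hj (by omega)]
    ring
  rw [Finset.sum_congr rfl hsum, ← Finset.sum_mul]
  have hS : ((j'.choose (m'+1) : ℕ) : ZMod p)
      = (∑ s' ∈ Finset.range (m'+1),
          (-1 : ZMod p)^m' * (-1 : ZMod p)^s' * (((j'+1).choose (s'+1) : ℕ) : ZMod p))
        + (-1 : ZMod p)^(m'+1) := by
    have h8 := alt_sum_choose p j' (m'+1)
    rw [Finset.sum_range_succ' _ (m'+1)] at h8
    simp only [pow_zero, Nat.choose_zero_right, Nat.cast_one, one_mul, mul_one] at h8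
    have h9 : (-1 : ZMod p)^(m'+1) * ((∑ s' ∈ Finset.range (m'+1),
        (-1 : ZMod p)^(s'+1) * (((j'+1).choose (s'+1) : ℕ) : ZMod p)) + 1)
        = (-1 : ZMod p)^(m'+1) * ((-1 : ZMod p)^(m'+1) * ((j'.choose (m'+1) : ℕ) : ZMod p)) := by
      rw [h8]
    have hsq : (-1 : ZMod p)^(m'+1) * (-1 : ZMod p)^(m'+1) = 1 := by
      rw [← pow_add]
      have : m' + 1 + (m' + 1) = 2 * (m'+1) := by ring
      rw [this, pow_mul]
      norm_num
    rw [← mul_assoc, hsq, one_mul] at h9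
    rw [← h9, mul_add, Finset.mul_sum, mul_one]
    congr 1
    refine Finset.sum_congr rfl fun s' _ => ?_
    have : (-1 : ZMod p)^(m'+1) * (-1 : ZMod p)^(s'+1) = (-1 : ZMod p)^m' * (-1 : ZMod p)^s' := by
      rw [pow_succ, pow_succ]
      ring
    rw [← mul_assoc, this, mul_assoc]
  rw [hS, add_mul]

-- chunk E : the key binomial-transform identity
lemma star (p : ℕ) (hp : p.Prime) :
    ∀ k, k ≤ p - 2 → ∀ m', m' ≤ p - 2 →
    ∑ i ∈ Finset.range (p-1), ((i.choose m' : ℕ) : ZMod p) * WT p k (i+1)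
      = (-1 : ZMod p)^(m'+1+k) * WT p k (m'+1) := by
  intro k
  induction k with
  | zero =>
    intro _ m' hm'
    have hp2 : 2 ≤ p := hp.two_le
    simp only [WT_zero, mul_one]
    rw [← Nat.cast_sum, sum_range_choose', choose_p_sub_one p hp (m'+1) (by omega), add_zero]
  | succ k ih =>
    intro hk1 m' hm'
    have hp2 : 2 ≤ p := hp.two_le
    have hkk : k ≤ p - 2 := by omega
    have hdag : ∑ i ∈ Finset.range (p-1), ((i.choose m' : ℕ) : ZMod p) * WT p (k+1) (i+1)
        = ∑ j' ∈ Finset.range (p-1), ((j'.choose (m'+1) : ℕ) : ZMod p) *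
            (((j'+1 : ℕ) : ZMod p)⁻¹ * WT p k (j'+1)) := by
      calc ∑ i ∈ Finset.range (p-1), ((i.choose m' : ℕ) : ZMod p) * WT p (k+1) (i+1)
          = ∑ i ∈ Finset.range (p-1), ∑ j' ∈ Finset.range (p-1),
              (if i + 1 ≤ j' then ((i.choose m' : ℕ) : ZMod p) *
                (((j'+1 : ℕ) : ZMod p)⁻¹ * WT p k (j'+1)) else 0) := by
            refine Finset.sum_congr rfl fun i _ => ?_
            rw [WT_succ_range, Finset.mul_sum]
            refine Finset.sum_congr rfl fun j' _ => ?_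
            rw [mul_ite, mul_zero]
        _ = ∑ j' ∈ Finset.range (p-1), ∑ i ∈ Finset.range (p-1),
              (if i + 1 ≤ j' then ((i.choose m' : ℕ) : ZMod p) *
                (((j'+1 : ℕ) : ZMod p)⁻¹ * WT p k (j'+1)) else 0) := Finset.sum_comm
        _ = ∑ j' ∈ Finset.range (p-1), ((j'.choose (m'+1) : ℕ) : ZMod p) *
              (((j'+1 : ℕ) : ZMod p)⁻¹ * WT p k (j'+1)) := by
            refine Finset.sum_congr rfl fun j' hj' => ?_
            rw [Finset.mem_range] at hj'
            rw [← Finset.sum_filter]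
            have hfil : Finset.filter (fun i => i + 1 ≤ j') (Finset.range (p-1))
                = Finset.range j' := by
              ext x
              simp only [Finset.mem_filter, Finset.mem_range]
              omega
            rw [hfil, ← Finset.sum_mul, ← Nat.cast_sum, sum_range_choose']
    rw [hdag]
    have hbin : ∀ j' ∈ Finset.range (p-1),
        ((j'.choose (m'+1) : ℕ) : ZMod p) * (((j'+1 : ℕ) : ZMod p)⁻¹ * WT p k (j'+1))
        = (∑ s' ∈ Finset.range (m'+1), (-1 : ZMod p)^m' * (-1 : ZMod p)^s' *
              (((s'+1 : ℕ) : ZMod p)⁻¹ * ((j'.choose s' : ℕ) : ZMod p))) * WT p k (j'+1)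
          + (-1 : ZMod p)^(m'+1) * (((j'+1 : ℕ) : ZMod p)⁻¹ * WT p k (j'+1)) := by
      intro j' hj'
      rw [Finset.mem_range] at hj'
      have hB := BIN p hp j' m' (by omega) (by omega)
      calc ((j'.choose (m'+1) : ℕ) : ZMod p) * (((j'+1 : ℕ) : ZMod p)⁻¹ * WT p k (j'+1))
          = (((j'.choose (m'+1) : ℕ) : ZMod p) * ((j'+1 : ℕ) : ZMod p)⁻¹) * WT p k (j'+1) := by
            ring
        _ = ((∑ s' ∈ Finset.range (m'+1), (-1 : ZMod p)^m' * (-1 : ZMod p)^s' *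
              (((s'+1 : ℕ) : ZMod p)⁻¹ * ((j'.choose s' : ℕ) : ZMod p)))
            + (-1 : ZMod p)^(m'+1) * ((j'+1 : ℕ) : ZMod p)⁻¹) * WT p k (j'+1) := by
            rw [hB]
        _ = _ := by ring
    rw [Finset.sum_congr rfl hbin, Finset.sum_add_distrib]
    have h2nd : ∑ j' ∈ Finset.range (p-1),
        (-1 : ZMod p)^(m'+1) * (((j'+1 : ℕ) : ZMod p)⁻¹ * WT p k (j'+1)) = 0 := by
      rw [← Finset.mul_sum, ← WT_succ_zero, WT_units_zero p hp (k+1) (by omega) hk1, mul_zero]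
    rw [h2nd, add_zero]
    have h1st : ∑ j' ∈ Finset.range (p-1),
        (∑ s' ∈ Finset.range (m'+1), (-1 : ZMod p)^m' * (-1 : ZMod p)^s' *
          (((s'+1 : ℕ) : ZMod p)⁻¹ * ((j'.choose s' : ℕ) : ZMod p))) * WT p k (j'+1)
        = ∑ s' ∈ Finset.range (m'+1), (-1 : ZMod p)^m' * (-1 : ZMod p)^s' *
            ((s'+1 : ℕ) : ZMod p)⁻¹ *
            (∑ j' ∈ Finset.range (p-1), ((j'.choose s' : ℕ) : ZMod p) * WT p k (j'+1)) := by
      calc ∑ j' ∈ Finset.range (p-1),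
            (∑ s' ∈ Finset.range (m'+1), (-1 : ZMod p)^m' * (-1 : ZMod p)^s' *
              (((s'+1 : ℕ) : ZMod p)⁻¹ * ((j'.choose s' : ℕ) : ZMod p))) * WT p k (j'+1)
          = ∑ j' ∈ Finset.range (p-1), ∑ s' ∈ Finset.range (m'+1),
              ((-1 : ZMod p)^m' * (-1 : ZMod p)^s' *
                (((s'+1 : ℕ) : ZMod p)⁻¹ * ((j'.choose s' : ℕ) : ZMod p))) * WT p k (j'+1) := by
            refine Finset.sum_congr rfl fun j' _ => ?_
            rw [Finset.sum_mul]
        _ = ∑ s' ∈ Finset.range (m'+1), ∑ j' ∈ Finset.range (p-1),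
              ((-1 : ZMod p)^m' * (-1 : ZMod p)^s' *
                (((s'+1 : ℕ) : ZMod p)⁻¹ * ((j'.choose s' : ℕ) : ZMod p))) * WT p k (j'+1) :=
            Finset.sum_comm
        _ = _ := by
            refine Finset.sum_congr rfl fun s' _ => ?_
            rw [Finset.mul_sum]
            refine Finset.sum_congr rfl fun j' _ => ?_
            ring
    rw [h1st]
    have hIH : ∀ s' ∈ Finset.range (m'+1),
        (-1 : ZMod p)^m' * (-1 : ZMod p)^s' * ((s'+1 : ℕ) : ZMod p)⁻¹ *
          (∑ j' ∈ Finset.range (p-1), ((j'.choose s' : ℕ) : ZMod p) * WT p k (j'+1))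
        = (-1 : ZMod p)^(m'+1+k) * (((s'+1 : ℕ) : ZMod p)⁻¹ * WT p k (s'+1)) := by
      intro s' hs'
      rw [Finset.mem_range] at hs'
      rw [ih hkk s' (by omega)]
      have hsgn : (-1 : ZMod p)^s' * (-1 : ZMod p)^(s'+1+k) = (-1 : ZMod p)^(1+k) := by
        rw [← pow_add]
        have h : s' + (s'+1+k) = 2*s' + (1+k) := by ring
        rw [h, pow_add, pow_mul]
        norm_num
      have hsgn2 : (-1 : ZMod p)^m' * (-1 : ZMod p)^(1+k) = (-1 : ZMod p)^(m'+1+k) := by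
        rw [← pow_add, ← add_assoc]
      calc (-1 : ZMod p)^m' * (-1 : ZMod p)^s' * ((s'+1 : ℕ) : ZMod p)⁻¹ *
            ((-1 : ZMod p)^(s'+1+k) * WT p k (s'+1))
          = ((-1 : ZMod p)^m' * ((-1 : ZMod p)^s' * (-1 : ZMod p)^(s'+1+k))) *
              (((s'+1 : ℕ) : ZMod p)⁻¹ * WT p k (s'+1)) := by ring
        _ = _ := by rw [hsgn, hsgn2]
    rw [Finset.sum_congr rfl hIH, ← Finset.mul_sum, WT_partial p k m' (by omega),
      WT_units_zero p hp (k+1) (by omega) hk1]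
    have : (0 : ZMod p) - WT p (k+1) (m'+1) = -WT p (k+1) (m'+1) := by ring
    rw [this]
    have hfin : (-1 : ZMod p)^(m'+1+k) * -WT p (k+1) (m'+1)
        = (-1 : ZMod p)^(m'+1+(k+1)) * WT p (k+1) (m'+1) := by
      have : m' + 1 + (k+1) = (m'+1+k) + 1 := by ring
      rw [this, pow_succ]
      ring
    rw [hfin]

-- chunk F : Newton series for the 6-periodic sequence
def aZ (m : ℕ) : ℤ := if m % 3 = 0 then 2 else -1

def c6 (j : ℕ) : ℤ :=
  if j % 6 = 0 then 2 else if j % 6 = 1 then 1 else if j % 6 = 2 then -1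
  else if j % 6 = 3 then -2 else if j % 6 = 4 then -1 else 1

def d1 (j : ℕ) : ℤ :=
  if j % 6 = 0 then -1 else if j % 6 = 1 then -2 else if j % 6 = 2 then -1
  else if j % 6 = 3 then 1 else if j % 6 = 4 then 2 else 1

def d2 (j : ℕ) : ℤ :=
  if j % 6 = 0 then -1 else if j % 6 = 1 then 1 else if j % 6 = 2 then 2
  else if j % 6 = 3 then 1 else if j % 6 = 4 then -1 else -2

lemma aZ_period (m : ℕ) : aZ (m + 3) = aZ m := by
  simp [aZ, Nat.add_mod_right]

lemma c6_step (i : ℕ) : c6 (i+1) = c6 i + d1 i := by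
  have h6 : i % 6 = 0 ∨ i % 6 = 1 ∨ i % 6 = 2 ∨ i % 6 = 3 ∨ i % 6 = 4 ∨ i % 6 = 5 := by omega
  have hs : (i+1) % 6 = (i % 6 + 1) % 6 := by omega
  rcases h6 with h | h | h | h | h | h <;> (rw [h] at hs; simp [c6, d1, h, hs])

lemma d1_step (i : ℕ) : d1 (i+1) = d1 i + d2 i := by
  have h6 : i % 6 = 0 ∨ i % 6 = 1 ∨ i % 6 = 2 ∨ i % 6 = 3 ∨ i % 6 = 4 ∨ i % 6 = 5 := by omega
  have hs : (i+1) % 6 = (i % 6 + 1) % 6 := by omega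
  rcases h6 with h | h | h | h | h | h <;> (rw [h] at hs; simp [d1, d2, h, hs])

lemma d2_step (i : ℕ) : d2 (i+1) = d2 i + c6 i := by
  have h6 : i % 6 = 0 ∨ i % 6 = 1 ∨ i % 6 = 2 ∨ i % 6 = 3 ∨ i % 6 = 4 ∨ i % 6 = 5 := by omega
  have hs : (i+1) % 6 = (i % 6 + 1) % 6 := by omega
  rcases h6 with h | h | h | h | h | h <;> (rw [h] at hs; simp [d2, c6, h, hs])

lemma newton_step (b : ℕ → ℤ) (i : ℕ) :
    ∑ m ∈ Finset.range (i+2), b m * ((i+1).choose m : ℤ)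
      = ∑ m ∈ Finset.range (i+1), b m * (i.choose m : ℤ)
        + ∑ m ∈ Finset.range (i+1), b (m+1) * (i.choose m : ℤ) := by
  rw [Finset.sum_range_succ' (fun m => b m * ((i+1).choose m : ℤ)) (i+1)]
  have hsplit : ∀ m' ∈ Finset.range (i+1),
      b (m'+1) * (((i+1).choose (m'+1) : ℕ) : ℤ)
        = b (m'+1) * (i.choose m' : ℤ) + b (m'+1) * (i.choose (m'+1) : ℤ) := by
    intro m' _
    rw [Nat.choose_succ_succ i m']
    push_cast
    ring
  rw [Finset.sum_congr rfl hsplit, Finset.sum_add_distrib]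
  have hlast : ∑ m' ∈ Finset.range (i+1), b (m'+1) * (i.choose (m'+1) : ℤ)
      = ∑ m ∈ Finset.range (i+2), b m * (i.choose m : ℤ) - b 0 * (i.choose 0 : ℤ) := by
    rw [Finset.sum_range_succ' (fun m => b m * (i.choose m : ℤ)) (i+1)]
    ring
  rw [hlast]
  rw [Finset.sum_range_succ (fun m => b m * (i.choose m : ℤ)) (i+1)]
  simp [Nat.choose_eq_zero_of_lt (show i < i + 1 by omega)]
  ring

lemma newton_c6 (i : ℕ) :
    (∑ m ∈ Finset.range (i+1), aZ m * (i.choose m : ℤ)) = c6 i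
    ∧ (∑ m ∈ Finset.range (i+1), aZ (m+1) * (i.choose m : ℤ)) = d1 i
    ∧ (∑ m ∈ Finset.range (i+1), aZ (m+2) * (i.choose m : ℤ)) = d2 i := by
  induction i with
  | zero => refine ⟨?_, ?_, ?_⟩ <;> simp [aZ, c6, d1, d2]
  | succ i ih =>
    obtain ⟨h0, h1, h2⟩ := ih
    refine ⟨?_, ?_, ?_⟩
    · rw [newton_step (fun m => aZ m) i, h0, h1, c6_step]
    · rw [newton_step (fun m => aZ (m+1)) i, h1, h2, d1_step]
    · rw [newton_step (fun m => aZ (m+2)) i]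
      have : ∑ m ∈ Finset.range (i+1), aZ (m+3) * (i.choose m : ℤ)
          = ∑ m ∈ Finset.range (i+1), aZ m * (i.choose m : ℤ) := by
        refine Finset.sum_congr rfl fun m _ => ?_
        rw [aZ_period]
      rw [this, h2, h0, d2_step]

lemma c6_eq_sign_aZ (m : ℕ) : c6 m = (-1 : ℤ)^m * aZ m := by
  have h6 : m % 6 = 0 ∨ m % 6 = 1 ∨ m % 6 = 2 ∨ m % 6 = 3 ∨ m % 6 = 4 ∨ m % 6 = 5 := by omega
  have hpar : (-1 : ℤ)^m = if m % 2 = 0 then 1 else -1 := by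
    rcases Nat.even_or_odd m with h | h
    · rw [if_pos (Nat.even_iff.mp h), Even.neg_one_pow h]
    · have hm1 : m % 2 = 1 := Nat.odd_iff.mp h
      rw [if_neg (by omega), Odd.neg_one_pow h]
  have h3 : m % 3 = m % 6 % 3 := (Nat.mod_mod_of_dvd m (by norm_num)).symm
  have h2 : m % 2 = m % 6 % 2 := (Nat.mod_mod_of_dvd m (by norm_num)).symm
  rcases h6 with h | h | h | h | h | h <;>
    (rw [h] at h3 h2; simp [c6, aZ, h, h3, hpar, h2])

-- chunk G : main vanishing result
lemma main_zero (p n₀ : ℕ) (hp : p.Prime) (heven : Even (n₀+1)) (hnp : (n₀+1) + 1 < p) :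
    ∑ j' ∈ Finset.range (p-1), ((c6 (j'+1) - 1 : ℤ) : ZMod p) *
      (((j'+1 : ℕ) : ZMod p)⁻¹ * WT p n₀ (j'+1)) = 0 := by
  haveI : Fact p.Prime := ⟨hp⟩
  have hp2 : 2 ≤ p := hp.two_le
  have hn₀ : 1 ≤ n₀ := by
    rcases Nat.eq_zero_or_pos n₀ with h | h
    · subst h; exact absurd heven Nat.not_even_one
    · exact h
  have hp4 : 3 < p := by omega
  set g : ℕ → ZMod p := fun j' => ((j'+1 : ℕ) : ZMod p)⁻¹ * WT p n₀ (j'+1) with hgdef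
  have hg : ∀ j', g j' = ((j'+1 : ℕ) : ZMod p)⁻¹ * WT p n₀ (j'+1) := fun _ => rfl
  have hWn : ∑ j' ∈ Finset.range (p-1), g j' = 0 := by
    calc ∑ j' ∈ Finset.range (p-1), g j'
        = ∑ j' ∈ Finset.range (p-1), ((j'+1 : ℕ) : ZMod p)⁻¹ * WT p n₀ (j'+1) :=
          Finset.sum_congr rfl fun j' _ => hg j'
      _ = WT p (n₀+1) 0 := (WT_succ_zero p n₀).symm
      _ = 0 := WT_units_zero p hp (n₀+1) (by omega) (by omega)
  have hkey : ∀ m', m' ≤ p - 2 →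
      ∑ j' ∈ Finset.range (p-1), (((j'+1).choose (m'+1) : ℕ) : ZMod p) * g j'
        = (-1 : ZMod p)^m' * g m' := by
    intro m' hm'
    have hpt : ∀ j' ∈ Finset.range (p-1),
        (((j'+1).choose (m'+1) : ℕ) : ZMod p) * g j'
          = ((m'+1 : ℕ) : ZMod p)⁻¹ * (((j'.choose m' : ℕ) : ZMod p) * WT p n₀ (j'+1)) := by
      intro j' hj'
      rw [Finset.mem_range] at hj'
      have hsw := choose_inv_swap p hp j' m' (by omega) (by omega)
      rw [hg]
      calc (((j'+1).choose (m'+1) : ℕ) : ZMod p) *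
            (((j'+1 : ℕ) : ZMod p)⁻¹ * WT p n₀ (j'+1))
          = (((j'+1 : ℕ) : ZMod p)⁻¹ * (((j'+1).choose (m'+1) : ℕ) : ZMod p)) *
              WT p n₀ (j'+1) := by ring
        _ = (((m'+1 : ℕ) : ZMod p)⁻¹ * ((j'.choose m' : ℕ) : ZMod p)) * WT p n₀ (j'+1) := by
            rw [← hsw]
        _ = _ := by ring
    rw [Finset.sum_congr rfl hpt, ← Finset.mul_sum,
      star p hp n₀ (by omega) m' hm']
    have hsgn : (-1 : ZMod p)^(m'+1+n₀) = (-1 : ZMod p)^m' := by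
      have h : m' + 1 + n₀ = m' + (n₀ + 1) := by ring
      rw [h, pow_add, Even.neg_one_pow heven, mul_one]
    rw [hsgn, hg]
    ring
  set X : ZMod p := ∑ j' ∈ Finset.range (p-1), ((c6 (j'+1) : ℤ) : ZMod p) * g j' with hX
  have hc6row : ∀ j' ∈ Finset.range (p-1),
      ((c6 (j'+1) : ℤ) : ZMod p)
        = ∑ m ∈ Finset.range p, ((aZ m : ℤ) : ZMod p) * (((j'+1).choose m : ℕ) : ZMod p) := by
    intro j' hj'
    rw [Finset.mem_range] at hj'
    have hZ : ∑ m ∈ Finset.range p, aZ m * (((j'+1).choose m : ℕ) : ℤ) = c6 (j'+1) := by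
      rw [← (newton_c6 (j'+1)).1]
      refine (Finset.sum_subset (Finset.range_subset_range.mpr (by omega)) ?_).symm
      intro m _ hm
      rw [Finset.mem_range, not_lt] at hm
      rw [Nat.choose_eq_zero_of_lt (by omega)]
      simp
    calc ((c6 (j'+1) : ℤ) : ZMod p)
        = ((∑ m ∈ Finset.range p, aZ m * (((j'+1).choose m : ℕ) : ℤ) : ℤ) : ZMod p) := by
          rw [hZ]
      _ = _ := by push_cast; rfl
  have hXswap : X = ∑ m ∈ Finset.range p, ((aZ m : ℤ) : ZMod p) *
      (∑ j' ∈ Finset.range (p-1), (((j'+1).choose m : ℕ) : ZMod p) * g j') := by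
    rw [hX, Finset.sum_congr rfl (fun j' hj' => by rw [hc6row j' hj', Finset.sum_mul])]
    rw [Finset.sum_comm]
    refine Finset.sum_congr rfl fun m _ => ?_
    rw [Finset.mul_sum]
    refine Finset.sum_congr rfl fun j' _ => ?_
    ring
  obtain ⟨q, hq⟩ : ∃ q, p = q + 1 := ⟨p - 1, by omega⟩
  have hq1 : p - 1 = q := by omega
  have hXval : X = ∑ m' ∈ Finset.range q, ((aZ (m'+1) : ℤ) : ZMod p) * ((-1 : ZMod p)^m' * g m') := by
    rw [hXswap]
    rw [show Finset.range p = Finset.range (q+1) by rw [hq]]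
    rw [Finset.sum_range_succ' _ q]
    have hm0 : ((aZ 0 : ℤ) : ZMod p) *
        (∑ j' ∈ Finset.range (p-1), (((j'+1).choose 0 : ℕ) : ZMod p) * g j') = 0 := by
      have h1 : ∀ j' ∈ Finset.range (p-1), (((j'+1).choose 0 : ℕ) : ZMod p) * g j' = g j' := by
        intro j' _
        rw [Nat.choose_zero_right, Nat.cast_one, one_mul]
      rw [Finset.sum_congr rfl h1, hWn, mul_zero]
    rw [hm0, add_zero]
    refine Finset.sum_congr rfl fun m' hm' => ?_
    rw [Finset.mem_range] at hm'
    rw [hkey m' (by omega)]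
  have hXneg : X = -X := by
    conv_lhs => rw [hXval]
    have hpt : ∀ m' ∈ Finset.range q,
        ((aZ (m'+1) : ℤ) : ZMod p) * ((-1 : ZMod p)^m' * g m')
          = -(((c6 (m'+1) : ℤ) : ZMod p) * g m') := by
      intro m' _
      have hZid : (-1 : ℤ)^m' * aZ (m'+1) = -c6 (m'+1) := by
        rw [c6_eq_sign_aZ (m'+1), pow_succ]
        ring
      have hcast : (-1 : ZMod p)^m' * ((aZ (m'+1) : ℤ) : ZMod p)
          = -((c6 (m'+1) : ℤ) : ZMod p) := by
        have := congrArg (Int.cast : ℤ → ZMod p) hZid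
        push_cast at this
        exact this
      calc ((aZ (m'+1) : ℤ) : ZMod p) * ((-1 : ZMod p)^m' * g m')
          = ((-1 : ZMod p)^m' * ((aZ (m'+1) : ℤ) : ZMod p)) * g m' := by ring
        _ = (-((c6 (m'+1) : ℤ) : ZMod p)) * g m' := by rw [hcast]
        _ = _ := by ring
    rw [Finset.sum_congr rfl hpt, Finset.sum_neg_distrib]
    rw [hX, hq1]
  have hX0 : X = 0 := by
    have h2 : (2 : ZMod p) * X = 0 := by linear_combination hXneg
    have h2ne : (2 : ZMod p) ≠ 0 := by
      have h := cast_ne_zero_of p 2 (by omega) (by omega)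
      simpa using h
    rcases mul_eq_zero.mp h2 with h | h
    · exact absurd h h2ne
    · exact h
  calc ∑ j' ∈ Finset.range (p-1), ((c6 (j'+1) - 1 : ℤ) : ZMod p) *
        (((j'+1 : ℕ) : ZMod p)⁻¹ * WT p n₀ (j'+1))
      = ∑ j' ∈ Finset.range (p-1),
          (((c6 (j'+1) : ℤ) : ZMod p) * g j' - g j') := by
        refine Finset.sum_congr rfl fun j' _ => ?_
        rw [hg]
        push_cast
        ring
    _ = X - ∑ j' ∈ Finset.range (p-1), g j' := by
        rw [Finset.sum_sub_distrib, hX]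
    _ = 0 := by rw [hWn, hX0, sub_zero]


end ZS

namespace ZS
-- chunk H : final assembly
lemma point_comb (p : ℕ) (j : ℕ) (P : ZMod p) :
    ((if j % 6 = 0 then P else 0) - (if j % 6 = 3 then P else 0))
      - 2 * ((if j % 6 = 2 then P else 0) + (if j % 6 = 3 then P else 0)
        + (if j % 6 = 4 then P else 0))
    = ((c6 j - 1 : ℤ) : ZMod p) * P := by
  have h6 : j % 6 = 0 ∨ j % 6 = 1 ∨ j % 6 = 2 ∨ j % 6 = 3 ∨ j % 6 = 4 ∨ j % 6 = 5 := by omega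
  rcases h6 with h | h | h | h | h | h <;> simp [c6, h] <;> (push_cast; ring)

end ZS


/-- Let `n` be a positive even integer and `p > n + 1` a prime. Then
`S₀ - S₃ = 2·(S₂ + S₃ + S₄)` in `ℤ/pℤ`. -/
theorem zhaoSunS_relation' (n p : ℕ) (hn : 0 < n) (heven : Even n)
    (hp : p.Prime) (hnp : n + 1 < p) :
    zhaoSunS n p hn 0 - zhaoSunS n p hn 3 =
      2 * (zhaoSunS n p hn 2 + zhaoSunS n p hn 3 + zhaoSunS n p hn 4) := by
  obtain ⟨n₀, rfl⟩ : ∃ n₀, n = n₀ + 1 := ⟨n - 1, by omega⟩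
  have h0 : (⟨0, hn⟩ : Fin (n₀+1)) = 0 := by
    ext
    simp
  have zh_eq : ∀ r : ℕ, zhaoSunS (n₀+1) p hn r
      = ∑ f ∈ (Fintype.piFinset fun _ : Fin (n₀+1) => Finset.Ioo 0 p).filter
          (fun f => ∀ i j : Fin (n₀+1), i < j → f i < f j),
        (if f 0 % 6 = r then ∏ k : Fin (n₀+1), ((f k : ZMod p))⁻¹ else 0) := by
    intro r
    rw [zhaoSunS]
    simp only [h0]
    rw [← Finset.filter_filter, Finset.sum_filter]
  have hzero : ∑ f ∈ (Fintype.piFinset fun _ : Fin (n₀+1) => Finset.Ioo 0 p).filter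
        (fun f => ∀ i j : Fin (n₀+1), i < j → f i < f j),
      ((ZS.c6 (f 0) - 1 : ℤ) : ZMod p) * ∏ k : Fin (n₀+1), ((f k : ZMod p))⁻¹ = 0 := by
    have hT := ZS.TMS p (fun j => ((ZS.c6 j - 1 : ℤ) : ZMod p)) n₀ 0
    try simp only [] at hT
    rw [hT]
    rw [ZS.sum_Ioo p (fun j => ((ZS.c6 j - 1 : ℤ) : ZMod p) *
      (((j : ℕ) : ZMod p)⁻¹ * ZS.WT p n₀ j)) 0]
    have hpos : ∀ j' ∈ Finset.range (p-1),
        (if 0 ≤ j' then ((ZS.c6 (j'+1) - 1 : ℤ) : ZMod p) *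
          (((j'+1 : ℕ) : ZMod p)⁻¹ * ZS.WT p n₀ (j'+1)) else 0)
        = ((ZS.c6 (j'+1) - 1 : ℤ) : ZMod p) * (((j'+1 : ℕ) : ZMod p)⁻¹ * ZS.WT p n₀ (j'+1)) :=
      fun j' _ => if_pos (Nat.zero_le _)
    rw [Finset.sum_congr rfl hpos]
    exact ZS.main_zero p n₀ hp heven hnp
  rw [← sub_eq_zero, zh_eq 0, zh_eq 3, zh_eq 2, zh_eq 4]
  rw [← Finset.sum_sub_distrib, ← Finset.sum_add_distrib, ← Finset.sum_add_distrib,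
    Finset.mul_sum, ← Finset.sum_sub_distrib]
  rw [Finset.sum_congr rfl (fun f _ => ZS.point_comb p (f 0) (∏ k : Fin (n₀+1), ((f k : ZMod p))⁻¹))]
  exact hzero
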